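/- For i = 1,2 let n_i ≥ 1, let Λ_i ⊆ ℤ^{n_i} be any subsets and let ν_i : ℤ^{n_i} → ℤ be any functions, and define ν : ℤ^{n_1+n_2} → ℤ by ν(λ₁,λ₂) = ν₁(λ₁) + ν₂(λ₂). Then μ(P(Λ₁ × Λ₂, ν)) = μ(P(Λ₁, ν₁))·μ(P(Λ₂, ν₂)), an identity in [0,∞] (with the convention 0·∞ = 0). -/

import Mathlib

open MeasureTheory ENNReal

namespace KZ

variable (p : ℕ) [Fact p.Prime]

noncomputable instance : MeasurableSpace ℚ_[p] := borel _
instance : BorelSpace ℚ_[p] := ⟨rfl⟩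

/-- `ℚ_p^n`. -/
abbrev QV (n : ℕ) := Fin n → ℚ_[p]

/-- The closed unit polydisc `ℤ_p^n ⊆ ℚ_p^n`. -/
def disc (n : ℕ) : Set (QV p n) := {x | ∀ i, ‖x i‖ ≤ 1}

/-- `ac_ℓ(x) = 1`: `x` is nonzero and the unit `x·p^{-v(x)}` is congruent to `1` mod `p^ℓ`. -/
def acIsOne (ℓ : ℕ) (x : ℚ_[p]) : Prop :=
  x ≠ 0 ∧ ‖x * (p : ℚ_[p]) ^ (-x.valuation) - 1‖ ≤ (p : ℝ) ^ (-(ℓ : ℤ))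

/-- The coordinatewise valuation vector. -/
noncomputable def vvec {n : ℕ} (x : QV p n) : Fin n → ℤ := fun i => (x i).valuation

/-- The set `P(Λ) ⊆ ℚ_p^n` attached to `Λ ⊆ ℤ^n`: all coordinates have `ac = 1` and the
valuation vector lies in `Λ`. -/
def Pset0 {n : ℕ} (Λ : Set (Fin n → ℤ)) : Set (QV p n) :=
  {x | (∀ i, acIsOne p 1 (x i)) ∧ vvec p x ∈ Λ}

/-- The set `P(Λ, ν) ⊆ ℚ_p^{n+1}`: pairs `(x, y)` with `x ∈ P(Λ)`, `ac(y) = 1` and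
`v(y) = -n - 1 - ν(v(x)) - ∑ v(x_i)`. -/
def Pnu0 {n : ℕ} (Λ : Set (Fin n → ℤ)) (ν : (Fin n → ℤ) → ℤ) : Set (QV p (n + 1)) :=
  {z | (∀ i : Fin n, acIsOne p 1 (z (Fin.castSucc i))) ∧
    vvec p (z ∘ Fin.castSucc) ∈ Λ ∧
    acIsOne p 1 (z (Fin.last n)) ∧
    (z (Fin.last n)).valuation =
      -(n : ℤ) - 1 - ν (vvec p (z ∘ Fin.castSucc))
        - ∑ i : Fin n, (z (Fin.castSucc i)).valuation}

open Metric

set_option linter.unusedSectionVars false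

lemma hp1R : (1 : ℝ) < p := by exact_mod_cast (Fact.out : p.Prime).one_lt
lemma hp0R : (0 : ℝ) < p := lt_trans one_pos (hp1R p)
lemma hpne1R : (p : ℝ) ≠ 1 := ne_of_gt (hp1R p)
lemma hpE0 : (p : ℝ≥0∞) ≠ 0 := by
  simp [(Fact.out : p.Prime).ne_zero]
lemma hpEtop : (p : ℝ≥0∞) ≠ ∞ := by simp

/-- The unit ball of `ℚ_[p]` as a positive compact set. -/
noncomputable def K1 : TopologicalSpace.PositiveCompacts ℚ_[p] where
  carrier := closedBall 0 1
  isCompact' := isCompact_closedBall 0 1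
  interior_nonempty' :=
    ⟨0, ball_subset_interior_closedBall (mem_ball_self one_pos)⟩

/-- A fixed additive Haar measure on `ℚ_[p]`, normalized so the unit ball has mass 1. -/
noncomputable def mu1 : Measure ℚ_[p] := Measure.addHaarMeasure (K1 p)

instance : (mu1 p).IsAddHaarMeasure := Measure.isAddHaarMeasure_addHaarMeasure _

lemma mu1_unitBall : mu1 p (closedBall 0 1) = 1 := Measure.addHaarMeasure_self

lemma mu1_closedBall_center (c : ℚ_[p]) (r : ℝ) :
    mu1 p (closedBall c r) = mu1 p (closedBall 0 r) := by
  have : closedBall c r = (fun x => -c + x) ⁻¹' closedBall (0 : ℚ_[p]) r := by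
    ext x
    simp [Metric.mem_closedBall, dist_eq_norm, neg_add_eq_sub, sub_eq_add_neg, add_comm]
  rw [this, measure_preimage_add]

lemma ball_decomp (m : ℤ) :
    closedBall (0 : ℚ_[p]) ((p : ℝ) ^ (-m)) =
      ⋃ j ∈ Finset.range p,
        closedBall ((j : ℚ_[p]) * (p : ℚ_[p]) ^ m) ((p : ℝ) ^ (-m - 1)) := by
  ext x
  simp only [Set.mem_iUnion, Metric.mem_closedBall, dist_eq_norm, dist_zero_right, sub_zero,
    Finset.mem_range, exists_prop]
  constructor
  · intro hx
    have hu : ‖x * (p : ℚ_[p]) ^ (-m)‖ ≤ 1 := by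
      rw [norm_mul, Padic.norm_p_zpow, neg_neg]
      calc ‖x‖ * (p : ℝ) ^ m ≤ (p : ℝ) ^ (-m) * (p : ℝ) ^ m := by
            apply mul_le_mul_of_nonneg_right hx (le_of_lt (zpow_pos (hp0R p) m))
        _ = 1 := by rw [← zpow_add₀ (ne_of_gt (hp0R p))]; simp
    set U : ℤ_[p] := ⟨x * (p : ℚ_[p]) ^ (-m), hu⟩ with hU
    refine ⟨U.appr 1, by simpa using U.appr_lt 1, ?_⟩
    have hspec : ‖U - (U.appr 1 : ℤ_[p])‖ ≤ (p : ℝ) ^ (-(1:ℕ) : ℤ) :=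
      ((U - (U.appr 1)).norm_le_pow_iff_mem_span_pow 1).mpr (U.appr_spec 1)
    have hnorm : ‖x * (p : ℚ_[p]) ^ (-m) - (U.appr 1 : ℚ_[p])‖ ≤ (p : ℝ) ^ (-1 : ℤ) := by
      have := hspec
      rw [PadicInt.norm_def] at this
      push_cast at this ⊢
      exact_mod_cast this
    have : ‖(x * (p : ℚ_[p]) ^ (-m) - (U.appr 1 : ℚ_[p])) * (p : ℚ_[p]) ^ m‖
        ≤ (p : ℝ) ^ (-1 : ℤ) * (p : ℝ) ^ (-m) := by
      rw [norm_mul, Padic.norm_p_zpow]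
      exact mul_le_mul_of_nonneg_right hnorm (le_of_lt (zpow_pos (hp0R p) (-m)))
    have hx' : (x * (p : ℚ_[p]) ^ (-m) - (U.appr 1 : ℚ_[p])) * (p : ℚ_[p]) ^ m
        = x - (U.appr 1 : ℚ_[p]) * (p : ℚ_[p]) ^ m := by
      have hpne : ((p : ℚ_[p]) : ℚ_[p]) ≠ 0 := by
        exact_mod_cast Nat.cast_ne_zero.mpr (Fact.out : p.Prime).ne_zero
      have hone : (p : ℚ_[p]) ^ (-m) * (p : ℚ_[p]) ^ m = 1 := by
        rw [← zpow_add₀ hpne]; simp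
      calc (x * (p : ℚ_[p]) ^ (-m) - (U.appr 1 : ℚ_[p])) * (p : ℚ_[p]) ^ m
          = x * ((p : ℚ_[p]) ^ (-m) * (p : ℚ_[p]) ^ m)
            - (U.appr 1 : ℚ_[p]) * (p : ℚ_[p]) ^ m := by ring
        _ = x - (U.appr 1 : ℚ_[p]) * (p : ℚ_[p]) ^ m := by rw [hone, mul_one]
    rw [hx'] at this
    refine le_trans this (le_of_eq ?_)
    rw [← zpow_add₀ (ne_of_gt (hp0R p))]
    ring_nf
  · rintro ⟨j, hj, hx⟩
    have h1 : ‖x - (j : ℚ_[p]) * (p : ℚ_[p]) ^ m‖ ≤ (p : ℝ) ^ (-m) :=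
      le_trans hx (zpow_le_zpow_right₀ (le_of_lt (hp1R p)) (by omega))
    have h2 : ‖(j : ℚ_[p]) * (p : ℚ_[p]) ^ m‖ ≤ (p : ℝ) ^ (-m) := by
      rw [norm_mul, Padic.norm_p_zpow]
      calc ‖((j : ℕ) : ℚ_[p])‖ * (p : ℝ) ^ (-m) ≤ 1 * (p : ℝ) ^ (-m) := by
            apply mul_le_mul_of_nonneg_right _ (le_of_lt (zpow_pos (hp0R p) (-m)))
            exact_mod_cast Padic.norm_int_le_one (j : ℤ)
        _ = (p : ℝ) ^ (-m) := one_mul _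
    calc ‖x‖ = ‖(x - (j : ℚ_[p]) * (p : ℚ_[p]) ^ m) + (j : ℚ_[p]) * (p : ℚ_[p]) ^ m‖ := by
          ring_nf
      _ ≤ max ‖x - (j : ℚ_[p]) * (p : ℚ_[p]) ^ m‖ ‖(j : ℚ_[p]) * (p : ℚ_[p]) ^ m‖ :=
          Padic.nonarchimedean _ _
      _ ≤ (p : ℝ) ^ (-m) := max_le h1 h2

lemma ball_step (m : ℤ) :
    mu1 p (closedBall (0 : ℚ_[p]) ((p : ℝ) ^ (-m))) =
      (p : ℝ≥0∞) * mu1 p (closedBall (0 : ℚ_[p]) ((p : ℝ) ^ (-m - 1))) := by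
  rw [ball_decomp p m, measure_biUnion_finset ?disj (fun j _ => measurableSet_closedBall)]
  · have : ∀ j ∈ Finset.range p,
        mu1 p (closedBall ((j : ℚ_[p]) * (p : ℚ_[p]) ^ m) ((p : ℝ) ^ (-m - 1)))
          = mu1 p (closedBall (0 : ℚ_[p]) ((p : ℝ) ^ (-m - 1))) :=
      fun j _ => mu1_closedBall_center p _ _
    rw [Finset.sum_congr rfl this, Finset.sum_const, Finset.card_range, nsmul_eq_mul]
  case disj =>
    intro i hi j hj hij
    simp only [Finset.coe_range, Set.mem_Iio] at hi hj
    refine Set.disjoint_left.mpr fun x hxi hxj => hij ?_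
    simp only [Metric.mem_closedBall, dist_eq_norm] at hxi hxj
    have hd : ‖(i : ℚ_[p]) * (p : ℚ_[p]) ^ m - (j : ℚ_[p]) * (p : ℚ_[p]) ^ m‖
        ≤ (p : ℝ) ^ (-m - 1) := by
      have : (i : ℚ_[p]) * (p : ℚ_[p]) ^ m - (j : ℚ_[p]) * (p : ℚ_[p]) ^ m
          = -(x - (i : ℚ_[p]) * (p : ℚ_[p]) ^ m) + (x - (j : ℚ_[p]) * (p : ℚ_[p]) ^ m) := by
        ring
      rw [this]
      exact le_trans (Padic.nonarchimedean _ _) (by rw [norm_neg]; exact max_le hxi hxj)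
    have hij' : ‖(((i - j : ℤ)) : ℚ_[p])‖ < 1 := by
      have hfac : (((i - j : ℤ)) : ℚ_[p]) * (p : ℚ_[p]) ^ m
          = (i : ℚ_[p]) * (p : ℚ_[p]) ^ m - (j : ℚ_[p]) * (p : ℚ_[p]) ^ m := by
        push_cast; ring
      have : ‖(((i - j : ℤ)) : ℚ_[p])‖ * (p : ℝ) ^ (-m)
          ≤ (p : ℝ) ^ (-m - 1) := by
        calc ‖(((i - j : ℤ)) : ℚ_[p])‖ * (p : ℝ) ^ (-m)
            = ‖(((i - j : ℤ)) : ℚ_[p]) * (p : ℚ_[p]) ^ m‖ := by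
              rw [norm_mul, Padic.norm_p_zpow]
          _ ≤ (p : ℝ) ^ (-m - 1) := by rw [hfac]; exact hd
      have h2 : ‖(((i - j : ℤ)) : ℚ_[p])‖ ≤ (p : ℝ) ^ (-1 : ℤ) := by
        have hpos := zpow_pos (hp0R p) (-m)
        refine le_of_mul_le_mul_right ?_ hpos
        calc ‖(((i - j : ℤ)) : ℚ_[p])‖ * (p : ℝ) ^ (-m) ≤ (p : ℝ) ^ (-m - 1) := this
          _ = (p : ℝ) ^ (-1 : ℤ) * (p : ℝ) ^ (-m) := by
              rw [← zpow_add₀ (ne_of_gt (hp0R p))]; ring_nf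
      calc ‖(((i - j : ℤ)) : ℚ_[p])‖ ≤ (p : ℝ) ^ (-1 : ℤ) := h2
        _ < 1 := by
          rw [zpow_neg, zpow_one]
          exact inv_lt_one_of_one_lt₀ (hp1R p)
    have hdvd : (p : ℤ) ∣ ((i : ℤ) - (j : ℤ)) := Padic.norm_intCast_lt_one_iff.mp hij'
    have : ((i : ℤ) - (j : ℤ)) = 0 :=
      Int.eq_zero_of_dvd_of_natAbs_lt_natAbs hdvd (by omega)
    omega

lemma mu1_cb_congr {a b : ℤ} (h : a = b) :
    mu1 p (closedBall (0 : ℚ_[p]) ((p : ℝ) ^ a)) = mu1 p (closedBall (0 : ℚ_[p]) ((p : ℝ) ^ b)) := by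
  rw [h]

lemma ball_step' (m : ℤ) :
    mu1 p (closedBall (0 : ℚ_[p]) ((p : ℝ) ^ m)) =
      (p : ℝ≥0∞) * mu1 p (closedBall (0 : ℚ_[p]) ((p : ℝ) ^ (m - 1))) := by
  have h := ball_step p (-m)
  rw [mu1_cb_congr p (show -(-m) = m by ring),
    mu1_cb_congr p (show -(-m) - 1 = m - 1 by ring)] at h
  exact h

lemma zpowE_congr {a b : ℤ} (h : a = b) : (p : ℝ≥0∞) ^ a = (p : ℝ≥0∞) ^ b := by rw [h]

lemma mu1_ball_zpow (m : ℤ) :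
    mu1 p (closedBall (0 : ℚ_[p]) ((p : ℝ) ^ m)) = (p : ℝ≥0∞) ^ m := by
  induction m using Int.induction_on with
  | zero => simpa using mu1_unitBall p
  | succ k ih =>
    have hstep := ball_step' p ((k : ℤ) + 1)
    rw [mu1_cb_congr p (show (k : ℤ) + 1 - 1 = (k : ℤ) by ring), ih] at hstep
    rw [hstep, zpowE_congr p (show ((k : ℤ) + 1) = 1 + (k : ℤ) by ring),
      ENNReal.zpow_add (hpE0 p) (hpEtop p), zpow_one]
  | pred k ih =>
    have hstep := ball_step' p (-(k : ℤ))
    rw [mu1_cb_congr p (show -(k : ℤ) - 1 = -((k : ℤ) + 1) by ring), ih] at hstep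
    have : (p : ℝ≥0∞) * (p : ℝ≥0∞) ^ (-((k : ℤ) + 1)) = (p : ℝ≥0∞) ^ (-(k : ℤ)) := by
      rw [zpowE_congr p (show (-(k : ℤ)) = 1 + -((k : ℤ) + 1) by ring),
        ENNReal.zpow_add (hpE0 p) (hpEtop p), zpow_one]
    have hmain := (ENNReal.mul_right_inj (hpE0 p) (hpEtop p)).mp
      (hstep.symm.trans this.symm)
    rw [mu1_cb_congr p (show -(k : ℤ) - 1 = -((k : ℤ) + 1) by ring),
      zpowE_congr p (show -(k : ℤ) - 1 = -((k : ℤ) + 1) by ring)]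
    exact hmain

/-- The annulus of elements with `ac = 1` and fixed valuation. -/
def Aset (m : ℤ) : Set ℚ_[p] := {x | acIsOne p 1 x ∧ x.valuation = m}

lemma Aset_eq (m : ℤ) :
    Aset p m = closedBall ((p : ℚ_[p]) ^ m) ((p : ℝ) ^ (-(m + 1))) := by
  have hpq : (p : ℚ_[p]) ≠ 0 :=
    Nat.cast_ne_zero.mpr (Fact.out : p.Prime).ne_zero
  have hone : ∀ a : ℤ, (p : ℚ_[p]) ^ (-a) * (p : ℚ_[p]) ^ a = 1 := by
    intro a; rw [← zpow_add₀ hpq]; simp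
  ext x
  simp only [Aset, acIsOne, Set.mem_setOf_eq, Metric.mem_closedBall, dist_eq_norm]
  constructor
  · rintro ⟨⟨hx0, hac⟩, hv⟩
    rw [hv] at hac
    have hfac : x - (p : ℚ_[p]) ^ m = (x * (p : ℚ_[p]) ^ (-m) - 1) * (p : ℚ_[p]) ^ m := by
      calc x - (p : ℚ_[p]) ^ m
          = x * ((p : ℚ_[p]) ^ (-m) * (p : ℚ_[p]) ^ m) - (p : ℚ_[p]) ^ m := by
            rw [hone m, mul_one]
        _ = (x * (p : ℚ_[p]) ^ (-m) - 1) * (p : ℚ_[p]) ^ m := by ring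
    rw [hfac, norm_mul, Padic.norm_p_zpow]
    calc ‖x * (p : ℚ_[p]) ^ (-m) - 1‖ * (p : ℝ) ^ (-m)
        ≤ (p : ℝ) ^ (-(1 : ℕ) : ℤ) * (p : ℝ) ^ (-m) :=
          mul_le_mul_of_nonneg_right hac (le_of_lt (zpow_pos (hp0R p) _))
      _ = (p : ℝ) ^ (-(m + 1)) := by
          rw [← zpow_add₀ (ne_of_gt (hp0R p))]; norm_num
  · intro hx
    have hlt : ‖x - (p : ℚ_[p]) ^ m‖ < ‖(p : ℚ_[p]) ^ m‖ := by
      rw [Padic.norm_p_zpow]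
      refine lt_of_le_of_lt hx ?_
      apply zpow_lt_zpow_right₀ (hp1R p); omega
    have hnx : ‖x‖ = (p : ℝ) ^ (-m) := by
      have hne : ‖x - (p : ℚ_[p]) ^ m‖ ≠ ‖(p : ℚ_[p]) ^ m‖ := ne_of_lt hlt
      calc ‖x‖ = ‖(x - (p : ℚ_[p]) ^ m) + (p : ℚ_[p]) ^ m‖ := by ring_nf
        _ = max ‖x - (p : ℚ_[p]) ^ m‖ ‖(p : ℚ_[p]) ^ m‖ := Padic.add_eq_max_of_ne hne
        _ = ‖(p : ℚ_[p]) ^ m‖ := max_eq_right (le_of_lt hlt)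
        _ = (p : ℝ) ^ (-m) := Padic.norm_p_zpow m
    have hx0 : x ≠ 0 := by
      intro h
      rw [h, norm_zero] at hnx
      exact absurd hnx.symm (ne_of_gt (zpow_pos (hp0R p) _))
    have hv : x.valuation = m := by
      have h1 := Padic.norm_eq_zpow_neg_valuation hx0
      rw [hnx] at h1
      have := (zpow_right_inj₀ (hp0R p) (hpne1R p)).mp h1.symm
      omega
    refine ⟨⟨hx0, ?_⟩, hv⟩
    rw [hv]
    have hfac : x * (p : ℚ_[p]) ^ (-m) - 1 = (x - (p : ℚ_[p]) ^ m) * (p : ℚ_[p]) ^ (-m) := by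
      calc x * (p : ℚ_[p]) ^ (-m) - 1
          = x * (p : ℚ_[p]) ^ (-m) - ((p : ℚ_[p]) ^ (-m) * (p : ℚ_[p]) ^ m) := by
            rw [hone m]
        _ = (x - (p : ℚ_[p]) ^ m) * (p : ℚ_[p]) ^ (-m) := by ring
    rw [hfac, norm_mul, Padic.norm_p_zpow]
    calc ‖x - (p : ℚ_[p]) ^ m‖ * (p : ℝ) ^ (-(-m))
        ≤ (p : ℝ) ^ (-(m + 1)) * (p : ℝ) ^ (-(-m)) :=
          mul_le_mul_of_nonneg_right hx (le_of_lt (zpow_pos (hp0R p) _))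
      _ = (p : ℝ) ^ (-(1 : ℕ) : ℤ) := by
          rw [← zpow_add₀ (ne_of_gt (hp0R p))]; norm_num

lemma measurable_Aset (m : ℤ) : MeasurableSet (Aset p m) := by
  rw [Aset_eq]; exact measurableSet_closedBall

lemma mu1_Aset (m : ℤ) : mu1 p (Aset p m) = (p : ℝ≥0∞) ^ (-(m + 1)) := by
  rw [Aset_eq, mu1_closedBall_center, mu1_ball_zpow]

/-- the pi measure on `ℚ_p^n`. -/
noncomputable def muPi (n : ℕ) : Measure (QV p n) := Measure.pi fun _ => mu1 p

noncomputable instance (n : ℕ) : (muPi p n).IsAddHaarMeasure :=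
  MeasureTheory.Measure.pi.isAddHaarMeasure _

lemma disc_eq (n : ℕ) : disc p n = Set.pi Set.univ fun _ : Fin n => closedBall (0 : ℚ_[p]) 1 := by
  ext x
  simp [disc, Set.mem_pi, Metric.mem_closedBall, dist_eq_norm]

lemma muPi_disc (n : ℕ) : muPi p n (disc p n) = 1 := by
  rw [disc_eq, muPi, Measure.pi_pi]
  simp [mu1_unitBall]

/-- any normalized Haar measure agrees with the pi measure. -/
lemma haar_eq_muPi (n : ℕ) (μ : Measure (QV p n)) [μ.IsAddHaarMeasure]
    (h : μ (disc p n) = 1) : μ = muPi p n := by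
  have key : μ = (Measure.addHaarScalarFactor μ (muPi p n) : ℝ≥0∞) • muPi p n :=
    Measure.isAddLeftInvariant_eq_smul μ (muPi p n)
  have h2 := congrArg (fun m : Measure (QV p n) => m (disc p n)) key
  simp only [Measure.smul_apply, smul_eq_mul] at h2
  rw [h, muPi_disc, mul_one] at h2
  rw [key, ← h2, one_smul]

/-- the exponent of the last coordinate. -/
def cexp (n : ℕ) (ν : (Fin n → ℤ) → ℤ) (l : Fin n → ℤ) : ℤ :=
  -(n : ℤ) - 1 - ν l - ∑ i, l i

lemma Pnu0_eq (n : ℕ) (Λ : Set (Fin n → ℤ)) (ν : (Fin n → ℤ) → ℤ) :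
    Pnu0 p Λ ν = ⋃ l ∈ Λ,
      Set.pi Set.univ fun i : Fin (n + 1) => Aset p ((Fin.snoc l (cexp n ν l) : Fin (n + 1) → ℤ) i) := by
  ext z
  constructor
  · rintro ⟨h1, h2, h3, h4⟩
    refine Set.mem_biUnion h2 ?_
    intro i _
    induction i using Fin.lastCases with
    | last =>
      simp only [Fin.snoc_last]
      exact ⟨h3, h4⟩
    | cast i =>
      simp only [Fin.snoc_castSucc]
      exact ⟨h1 i, rfl⟩
  · intro hz
    rcases Set.mem_iUnion₂.mp hz with ⟨l, hl, hzl⟩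
    have hc : ∀ i : Fin n, z (Fin.castSucc i) ∈ Aset p (l i) := by
      intro i
      have := hzl (Fin.castSucc i) (Set.mem_univ _)
      simpa only [Fin.snoc_castSucc] using this
    have hlast := hzl (Fin.last n) (Set.mem_univ _)
    simp only [Fin.snoc_last] at hlast
    have hv : vvec p (z ∘ Fin.castSucc) = l := funext fun i => (hc i).2
    refine ⟨fun i => (hc i).1, hv ▸ hl, hlast.1, ?_⟩
    rw [hv]
    have hsum : ∑ i : Fin n, (z (Fin.castSucc i)).valuation = ∑ i, l i :=
      Finset.sum_congr rfl fun i _ => (hc i).2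
    rw [hsum]
    exact hlast.2

lemma prod_zpowE {ι : Type*} (s : Finset ι) (f : ι → ℤ) :
    ∏ i ∈ s, (p : ℝ≥0∞) ^ (f i) = (p : ℝ≥0∞) ^ (∑ i ∈ s, f i) := by
  classical
  induction s using Finset.induction with
  | empty => simp
  | insert _ _ hx ih =>
    rw [Finset.prod_insert hx, Finset.sum_insert hx, ih,
      ENNReal.zpow_add (hpE0 p) (hpEtop p)]

/-- the measure of a `Pnu0` set under any normalized Haar measure. -/
lemma measure_Pnu0 (n : ℕ) (Λ : Set (Fin n → ℤ)) (ν : (Fin n → ℤ) → ℤ)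
    (μ : Measure (QV p (n + 1))) [μ.IsAddHaarMeasure] (h : μ (disc p (n + 1)) = 1) :
    μ (Pnu0 p Λ ν) = ∑' l : Λ, (p : ℝ≥0∞) ^ (ν l) := by
  rw [haar_eq_muPi p (n + 1) μ h, Pnu0_eq]
  rw [measure_biUnion (Set.to_countable Λ) ?disj
    (fun l _ => MeasurableSet.univ_pi fun i => measurable_Aset p _)]
  · refine tsum_congr fun l => ?_
    rw [muPi, Measure.pi_pi]
    have : ∀ i : Fin (n + 1),
        mu1 p (Aset p ((Fin.snoc (l : Fin n → ℤ) (cexp n ν l) : Fin (n + 1) → ℤ) i))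
          = (p : ℝ≥0∞) ^ (-((Fin.snoc (l : Fin n → ℤ) (cexp n ν l) : Fin (n + 1) → ℤ) i + 1)) :=
      fun i => mu1_Aset p _
    rw [Finset.prod_congr rfl fun i _ => this i, prod_zpowE]
    congr 1
    rw [Fin.sum_univ_castSucc]
    simp only [Fin.snoc_castSucc, Fin.snoc_last, cexp]
    rw [Finset.sum_congr rfl fun (i : Fin n) _ =>
      (show -((l : Fin n → ℤ) i + 1) = -(l : Fin n → ℤ) i + (-1) by ring),
      Finset.sum_add_distrib]
    simp [Finset.sum_neg_distrib, Fintype.card_fin]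
    ring
  case disj =>
    intro l1 hl1 l2 hl2 hne
    refine Set.disjoint_left.mpr fun z hz1 hz2 => hne ?_
    funext i
    have h1 := hz1 (Fin.castSucc i) (Set.mem_univ _)
    have h2 := hz2 (Fin.castSucc i) (Set.mem_univ _)
    simp only [Fin.snoc_castSucc] at h1 h2
    rw [← h1.2, ← h2.2]

/-- Multiplicativity of the measure of the sets `P(Λ,ν)`:
`μ(P(Λ₁ × Λ₂, ν₁ ⊕ ν₂)) = μ(P(Λ₁,ν₁))·μ(P(Λ₂,ν₂))` in `[0,∞]`, where each `ℚ_p^k` carries the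
Haar measure normalized by `μ(ℤ_p^k) = 1`. -/
theorem measure_Pnu_prod
    (p : ℕ) [Fact p.Prime] (n₁ n₂ : ℕ) (h₁ : 1 ≤ n₁) (h₂ : 1 ≤ n₂)
    (Λ₁ : Set (Fin n₁ → ℤ)) (Λ₂ : Set (Fin n₂ → ℤ))
    (ν₁ : (Fin n₁ → ℤ) → ℤ) (ν₂ : (Fin n₂ → ℤ) → ℤ)
    (μa : Measure (QV p (n₁ + 1))) [μa.IsAddHaarMeasure] (ha : μa (disc p (n₁ + 1)) = 1)
    (μb : Measure (QV p (n₂ + 1))) [μb.IsAddHaarMeasure] (hb : μb (disc p (n₂ + 1)) = 1)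
    (μc : Measure (QV p (n₁ + n₂ + 1))) [μc.IsAddHaarMeasure]
    (hc : μc (disc p (n₁ + n₂ + 1)) = 1) :
    μc (Pnu0 p
        {w : Fin (n₁ + n₂) → ℤ | (fun i => w (Fin.castAdd n₂ i)) ∈ Λ₁ ∧
          (fun j => w (Fin.natAdd n₁ j)) ∈ Λ₂}
        (fun w => ν₁ (fun i => w (Fin.castAdd n₂ i)) + ν₂ (fun j => w (Fin.natAdd n₁ j))))
      = μa (Pnu0 p Λ₁ ν₁) * μb (Pnu0 p Λ₂ ν₂) := by
  rw [measure_Pnu0 p n₁ Λ₁ ν₁ μa ha, measure_Pnu0 p n₂ Λ₂ ν₂ μb hb,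
    measure_Pnu0 p (n₁ + n₂) _ _ μc hc]
  set S : Set (Fin (n₁ + n₂) → ℤ) :=
    {w | (fun i => w (Fin.castAdd n₂ i)) ∈ Λ₁ ∧ (fun j => w (Fin.natAdd n₁ j)) ∈ Λ₂} with hS
  set F : (Fin (n₁ + n₂) → ℤ) → ℝ≥0∞ :=
    fun w => (p : ℝ≥0∞) ^ (ν₁ (fun i => w (Fin.castAdd n₂ i))
      + ν₂ (fun j => w (Fin.natAdd n₁ j))) with hF
  have hL : (∑' l : S, F l) = (∑' l : Λ₁, (p : ℝ≥0∞) ^ (ν₁ l)) *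
      (∑' l : Λ₂, (p : ℝ≥0∞) ^ (ν₂ l)) := by
    rw [tsum_subtype S F, tsum_subtype Λ₁ (fun l => (p : ℝ≥0∞) ^ (ν₁ l)),
      tsum_subtype Λ₂ (fun l => (p : ℝ≥0∞) ^ (ν₂ l))]
    set E : ((Fin n₁ → ℤ) × (Fin n₂ → ℤ)) ≃ (Fin (n₁ + n₂) → ℤ) :=
      (Equiv.sumArrowEquivProdArrow (Fin n₁) (Fin n₂) ℤ).symm.trans
        (Equiv.arrowCongr finSumFinEquiv (Equiv.refl ℤ)) with hE
    have hfront : ∀ (a : Fin n₁ → ℤ) (b : Fin n₂ → ℤ),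
        (fun i => E (a, b) (Fin.castAdd n₂ i)) = a := by
      intro a b; funext i
      simp [hE, Equiv.arrowCongr, Equiv.sumArrowEquivProdArrow]
    have hback : ∀ (a : Fin n₁ → ℤ) (b : Fin n₂ → ℤ),
        (fun j => E (a, b) (Fin.natAdd n₁ j)) = b := by
      intro a b; funext j
      simp [hE, Equiv.arrowCongr, Equiv.sumArrowEquivProdArrow]
    rw [← Equiv.tsum_eq E (S.indicator F)]
    rw [show (∑' (c : (Fin n₁ → ℤ) × (Fin n₂ → ℤ)), S.indicator F (E c))
        = ∑' a, ∑' b, S.indicator F (E (a, b)) from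
      ENNReal.tsum_prod (f := fun a b => S.indicator F (E (a, b)))]
    have key : ∀ (a : Fin n₁ → ℤ) (b : Fin n₂ → ℤ),
        S.indicator F (E (a, b)) =
          (Λ₁.indicator (fun l => (p : ℝ≥0∞) ^ (ν₁ l)) a) *
          (Λ₂.indicator (fun l => (p : ℝ≥0∞) ^ (ν₂ l)) b) := by
      intro a b
      have hmem : E (a, b) ∈ S ↔ a ∈ Λ₁ ∧ b ∈ Λ₂ := by
        rw [hS]; simp only [Set.mem_setOf_eq, hfront, hback]
      have hFE : F (E (a, b)) = (p : ℝ≥0∞) ^ (ν₁ a) * (p : ℝ≥0∞) ^ (ν₂ b) := by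
        rw [hF]; simp only [hfront, hback]
        exact ENNReal.zpow_add (hpE0 p) (hpEtop p) _ _
      by_cases hA : a ∈ Λ₁ <;> by_cases hB : b ∈ Λ₂ <;>
        simp [Set.indicator, hmem, hA, hB, hFE]
    calc ∑' a, ∑' b, S.indicator F (E (a, b))
        = ∑' (a : Fin n₁ → ℤ), ∑' (b : Fin n₂ → ℤ),
            (Λ₁.indicator (fun l => (p : ℝ≥0∞) ^ (ν₁ l)) a) *
            (Λ₂.indicator (fun l => (p : ℝ≥0∞) ^ (ν₂ l)) b) := by
          exact tsum_congr fun a => tsum_congr fun b => key a b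
      _ = ∑' (a : Fin n₁ → ℤ), (Λ₁.indicator (fun l => (p : ℝ≥0∞) ^ (ν₁ l)) a) *
            ∑' (b : Fin n₂ → ℤ), (Λ₂.indicator (fun l => (p : ℝ≥0∞) ^ (ν₂ l)) b) := by
          exact tsum_congr fun a => ENNReal.tsum_mul_left
      _ = _ := ENNReal.tsum_mul_right
  exact hL

end KZ
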